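/- arXiv:2602.24256 — 5 statements merged into one kernel-verified Lean document; each statement's English description precedes it below -/
import Mathlib

section
/- Let F, A, S, C be pairwise commuting symmetric positive definite matrices with S² + C² = I and let H be symmetric positive definite. With K = A(SHS + CFC)A and Y = (CH⁻¹C + SF⁻¹S)⁻¹, one has det(K)·det(Y) = det(H)·det(A²F), i.e., writing G = A²F, det(K)·det(Y) = det(H)·det(G). -/
open Matrix

private lemma posDef_conj {n : ℕ} {X B : Matrix (Fin n) (Fin n) ℝ}
    (hX : X.PosDef) (hB : IsUnit B) : (Bᴴ * X * B).PosDef := by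
  refine PosDef.of_dotProduct_mulVec_pos (isHermitian_conjTranspose_mul_mul B hX.1) fun x hx => ?_
  have hBx : B *ᵥ x ≠ 0 := by
    intro h
    exact hx ((Matrix.mulVec_injective_iff_isUnit.mpr hB).eq_iff.mp (by simpa using h))
  simpa only [star_mulVec, dotProduct_mulVec, vecMul_vecMul] using hX.dotProduct_mulVec_pos hBx

private lemma inv_comm' {n : ℕ} {X Y : Matrix (Fin n) (Fin n) ℝ}
    (hX : IsUnit X.det) (h : X * Y = Y * X) : X⁻¹ * Y = Y * X⁻¹ := by
  calc X⁻¹ * Y = X⁻¹ * Y * (X * X⁻¹) := by rw [mul_nonsing_inv X hX, mul_one]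
    _ = X⁻¹ * (Y * X) * X⁻¹ := by simp only [mul_assoc]
    _ = X⁻¹ * (X * Y) * X⁻¹ := by rw [← h]
    _ = Y * X⁻¹ := by
        simp only [← mul_assoc]
        rw [nonsing_inv_mul X hX, one_mul]

theorem ghmc_det_identity
    {d : ℕ} (F A S C H : Matrix (Fin d) (Fin d) ℝ)
    (hF : F.PosDef) (hA : A.PosDef) (hS : S.PosDef) (hC : C.PosDef) (hH : H.PosDef)
    (hFA : F * A = A * F) (hFS : F * S = S * F) (hFC : F * C = C * F)
    (hAS : A * S = S * A) (hAC : A * C = C * A) (hSC : S * C = C * S)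
    (hSC1 : S * S + C * C = 1)
    (K Y G : Matrix (Fin d) (Fin d) ℝ)
    (hK : K = A * (S * H * S + C * F * C) * A)
    (hY : Y = (C * H⁻¹ * C + S * F⁻¹ * S)⁻¹)
    (hG : G = A * A * F) :
    K.det * Y.det = H.det * G.det := by
  have hFd : IsUnit F.det := hF.det_pos.ne'.isUnit
  have hSd : IsUnit S.det := hS.det_pos.ne'.isUnit
  have hCd : IsUnit C.det := hC.det_pos.ne'.isUnit
  have hHd : IsUnit H.det := hH.det_pos.ne'.isUnit
  set M : Matrix (Fin d) (Fin d) ℝ := C * H⁻¹ * C + S * F⁻¹ * S with hM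
  set N : Matrix (Fin d) (Fin d) ℝ := S * H * S + C * F * C with hN
  -- M is positive definite
  have hMpd : M.PosDef := by
    have h1 : (Cᴴ * H⁻¹ * C).PosDef := posDef_conj hH.inv hC.isUnit
    have h2 : (Sᴴ * F⁻¹ * S).PosDef := posDef_conj hF.inv hS.isUnit
    rw [hC.isHermitian.eq] at h1
    rw [hS.isHermitian.eq] at h2
    exact h1.add h2
  -- key matrix identity
  have hMF : M * F = C * H⁻¹ * (C * F) + S * S := by
    rw [hM, add_mul]
    congr 1
    · rw [mul_assoc]
    · calc S * F⁻¹ * S * F = S * F⁻¹ * (F * S) := by rw [mul_assoc, ← hFS]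
        _ = S * ((F⁻¹ * F) * S) := by rw [mul_assoc S F⁻¹, ← mul_assoc F⁻¹ F S]
        _ = S * S := by rw [nonsing_inv_mul F hFd, one_mul]
  have e1 : S * H * C⁻¹ * (C * H⁻¹ * (C * F)) * C = S * (C * (F * C)) := by
    simp only [mul_assoc]
    rw [← mul_assoc C⁻¹ C, nonsing_inv_mul C hCd, one_mul,
      ← mul_assoc H H⁻¹, mul_nonsing_inv H hHd, one_mul]
  have e2 : S * H * C⁻¹ * (S * S) * C = S * (H * (S * S)) := by
    simp only [mul_assoc]
    rw [hSC, ← mul_assoc S C, hSC, mul_assoc C S S, ← mul_assoc C⁻¹ C,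
      nonsing_inv_mul C hCd, one_mul]
  have e3 : N * S = S * (H * (S * S)) + S * (C * (F * C)) := by
    simp only [hN, add_mul, mul_assoc]
    congr 1
    rw [← hSC, ← mul_assoc F S, hFS, mul_assoc S F, ← mul_assoc C S, ← hSC,
      mul_assoc S C]
  have key : N * S = S * H * C⁻¹ * (M * F) * C := by
    calc N * S = S * (H * (S * S)) + S * (C * (F * C)) := e3
      _ = S * H * C⁻¹ * (S * S) * C + S * H * C⁻¹ * (C * H⁻¹ * (C * F)) * C := by
          rw [e1, e2]
      _ = S * H * C⁻¹ * (C * H⁻¹ * (C * F) + S * S) * C := by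
          rw [mul_add, add_mul, add_comm]
      _ = S * H * C⁻¹ * (M * F) * C := by rw [hMF]
  -- determinant consequence
  have hdetN : N.det = H.det * M.det * F.det := by
    have h := congrArg Matrix.det key
    simp only [det_mul, det_nonsing_inv, Ring.inverse_eq_inv] at h
    have hS0 : S.det ≠ 0 := hS.det_pos.ne'
    have hC0 : C.det ≠ 0 := hC.det_pos.ne'
    apply mul_right_cancel₀ hS0
    rw [h]
    field_simp
  have hdetY : Y.det = M.det⁻¹ := by
    rw [hY, det_nonsing_inv, Ring.inverse_eq_inv]
  have hdetK : K.det = A.det * N.det * A.det := by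
    rw [hK, det_mul, det_mul]
  have hdetG : G.det = A.det * A.det * F.det := by
    rw [hG, det_mul, det_mul]
  have hM0 : M.det ≠ 0 := hMpd.det_pos.ne'
  rw [hdetK, hdetY, hdetG, hdetN]
  field_simp
end

section
/- Let F, A, S, C be pairwise commuting symmetric positive definite matrices with S² + C² = I and H symmetric positive definite. Then the matrix Y defined as CHC + SFS - C(H-F)S(SHS+CFC)⁻¹S(H-F)C equals (CH⁻¹C + SF⁻¹S)⁻¹. -/
open Matrix

set_option maxHeartbeats 1600000

lemma ghmc_sandwich_posDef {d : ℕ} {S H : Matrix (Fin d) (Fin d) ℝ}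
    (hS : S.PosDef) (hH : H.PosDef) : (S * H * S).PosDef := by
  refine posDef_iff_dotProduct_mulVec.mpr ⟨?_, ?_⟩
  · show (S * H * S)ᴴ = S * H * S
    rw [conjTranspose_mul, conjTranspose_mul, hS.isHermitian.eq, hH.isHermitian.eq, mul_assoc]
  · intro x hx
    have hy : S *ᵥ x ≠ 0 := by
      intro h
      exact hx (Matrix.mulVec_injective_iff_isUnit.mpr hS.isUnit (by simpa using h))
    have hpos := hH.dotProduct_mulVec_pos hy
    have hST : Sᵀ = S := hS.isHermitian.eq
    calc star x ⬝ᵥ ((S * H * S) *ᵥ x)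
        = x ⬝ᵥ (S *ᵥ (H *ᵥ (S *ᵥ x))) := by
          simp [Matrix.mulVec_mulVec, mul_assoc]
      _ = (x ᵥ* S) ⬝ᵥ (H *ᵥ (S *ᵥ x)) := by rw [Matrix.dotProduct_mulVec]
      _ = star (S *ᵥ x) ⬝ᵥ (H *ᵥ (S *ᵥ x)) := by
          rw [show x ᵥ* S = S *ᵥ x by rw [← hST, Matrix.mulVec_transpose, hST]]
          simp
      _ > 0 := hpos

theorem ghmc_Y_identity
    {d : ℕ} (F A S C H : Matrix (Fin d) (Fin d) ℝ)
    (hF : F.PosDef) (hA : A.PosDef) (hS : S.PosDef) (hC : C.PosDef) (hH : H.PosDef)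
    (hFA : F * A = A * F) (hFS : F * S = S * F) (hFC : F * C = C * F)
    (hAS : A * S = S * A) (hAC : A * C = C * A) (hSC : S * C = C * S)
    (hSC1 : S * S + C * C = 1) :
    C * H * C + S * F * S
      - C * (H - F) * S * (S * H * S + C * F * C)⁻¹ * (S * (H - F) * C)
    = (C * H⁻¹ * C + S * F⁻¹ * S)⁻¹ := by
  have hFdet : IsUnit F.det := hF.det_pos.ne'.isUnit
  have hHdet : IsUnit H.det := hH.det_pos.ne'.isUnit
  -- cancellation lemmas
  have hFFi : F * F⁻¹ = 1 := Matrix.mul_nonsing_inv F hFdet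
  have hFiF : F⁻¹ * F = 1 := Matrix.nonsing_inv_mul F hFdet
  have hHHi : H * H⁻¹ = 1 := Matrix.mul_nonsing_inv H hHdet
  have hHiH : H⁻¹ * H = 1 := Matrix.nonsing_inv_mul H hHdet
  -- F⁻¹ commutes with S and C
  have hFiS : S * F⁻¹ = F⁻¹ * S := by
    calc S * F⁻¹ = F⁻¹ * (F * S) * F⁻¹ := by rw [← mul_assoc, hFiF, one_mul]
      _ = F⁻¹ * (S * F) * F⁻¹ := by rw [hFS]
      _ = F⁻¹ * S := by rw [mul_assoc, mul_assoc, hFFi, mul_one]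
  have hFiC : C * F⁻¹ = F⁻¹ * C := by
    calc C * F⁻¹ = F⁻¹ * (F * C) * F⁻¹ := by rw [← mul_assoc, hFiF, one_mul]
      _ = F⁻¹ * (C * F) * F⁻¹ := by rw [hFC]
      _ = F⁻¹ * C := by rw [mul_assoc, mul_assoc, hFFi, mul_one]
  -- universally quantified rewriting rules
  have sc : ∀ X : Matrix (Fin d) (Fin d) ℝ, S * (C * X) = C * (S * X) := by
    intro X; rw [← mul_assoc, hSC, mul_assoc]
  have fs : ∀ X : Matrix (Fin d) (Fin d) ℝ, F * (S * X) = S * (F * X) := by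
    intro X; rw [← mul_assoc, hFS, mul_assoc]
  have fc : ∀ X : Matrix (Fin d) (Fin d) ℝ, F * (C * X) = C * (F * X) := by
    intro X; rw [← mul_assoc, hFC, mul_assoc]
  have gs : ∀ X : Matrix (Fin d) (Fin d) ℝ, F⁻¹ * (S * X) = S * (F⁻¹ * X) := by
    intro X; rw [← mul_assoc, ← hFiS, mul_assoc]
  have gc : ∀ X : Matrix (Fin d) (Fin d) ℝ, F⁻¹ * (C * X) = C * (F⁻¹ * X) := by
    intro X; rw [← mul_assoc, ← hFiC, mul_assoc]
  have fg : ∀ X : Matrix (Fin d) (Fin d) ℝ, F * (F⁻¹ * X) = X := by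
    intro X; rw [← mul_assoc, hFFi, one_mul]
  have gf : ∀ X : Matrix (Fin d) (Fin d) ℝ, F⁻¹ * (F * X) = X := by
    intro X; rw [← mul_assoc, hFiF, one_mul]
  have hh : ∀ X : Matrix (Fin d) (Fin d) ℝ, H * (H⁻¹ * X) = X := by
    intro X; rw [← mul_assoc, hHHi, one_mul]
  have h'h : ∀ X : Matrix (Fin d) (Fin d) ℝ, H⁻¹ * (H * X) = X := by
    intro X; rw [← mul_assoc, hHiH, one_mul]
  have cc : ∀ X : Matrix (Fin d) (Fin d) ℝ, C * (C * X) = X - S * (S * X) := by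
    intro X
    have : (S * S + C * C) * X = X := by rw [hSC1, one_mul]
    rw [← mul_assoc]
    linear_combination (norm := noncomm_ring) this
  have cc' : C * C = 1 - S * S := by linear_combination (norm := noncomm_ring) hSC1
  -- invertibility of M = S*H*S + C*F*C
  have hM : (S * H * S + C * F * C).PosDef :=
    (ghmc_sandwich_posDef hS hH).add (ghmc_sandwich_posDef hC hF)
  have hMinv : (S * H * S + C * F * C)⁻¹ * (S * H * S + C * F * C) = 1 :=
    Matrix.nonsing_inv_mul _ hM.det_pos.ne'.isUnit
  -- key algebraic identities
  have lemA : (S * (H - F) * C) * (C * H⁻¹ * C + S * F⁻¹ * S)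
      = (S * H * S + C * F * C) * (S * (F⁻¹ - H⁻¹) * C) := by
    simp only [mul_add, add_mul, mul_sub, sub_mul, mul_assoc, mul_one, one_mul,
      sc, fs, fc, gs, gc, fg, gf, hh, h'h, cc, cc',
      hSC, hFS, hFC, hFiS.symm, hFiC.symm, hFFi, hFiF, hHHi, hHiH]
    noncomm_ring
  have lemB : (C * H * C + S * F * S) * (C * H⁻¹ * C + S * F⁻¹ * S)
      - C * (H - F) * S * (S * (F⁻¹ - H⁻¹) * C) = 1 := by
    simp only [mul_add, add_mul, mul_sub, sub_mul, mul_assoc, mul_one, one_mul,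
      sc, fs, fc, gs, gc, fg, gf, hh, h'h, cc, cc',
      hSC, hFS, hFC, hFiS.symm, hFiC.symm, hFFi, hFiF, hHHi, hHiH]
    noncomm_ring
  have key : (C * H * C + S * F * S
      - C * (H - F) * S * (S * H * S + C * F * C)⁻¹ * (S * (H - F) * C))
      * (C * H⁻¹ * C + S * F⁻¹ * S) = 1 := by
    calc (C * H * C + S * F * S
        - C * (H - F) * S * (S * H * S + C * F * C)⁻¹ * (S * (H - F) * C))
        * (C * H⁻¹ * C + S * F⁻¹ * S)
        = (C * H * C + S * F * S) * (C * H⁻¹ * C + S * F⁻¹ * S)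
          - C * (H - F) * S * ((S * H * S + C * F * C)⁻¹
            * ((S * (H - F) * C) * (C * H⁻¹ * C + S * F⁻¹ * S))) := by
          simp only [sub_mul, mul_assoc]
      _ = (C * H * C + S * F * S) * (C * H⁻¹ * C + S * F⁻¹ * S)
          - C * (H - F) * S * ((S * H * S + C * F * C)⁻¹
            * ((S * H * S + C * F * C) * (S * (F⁻¹ - H⁻¹) * C))) := by rw [lemA]
      _ = (C * H * C + S * F * S) * (C * H⁻¹ * C + S * F⁻¹ * S)
          - C * (H - F) * S * (S * (F⁻¹ - H⁻¹) * C) := by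
          rw [← mul_assoc ((S * H * S + C * F * C)⁻¹), hMinv, one_mul]
      _ = 1 := lemB
  exact (Matrix.inv_eq_left_inv key).symm
end

section
/- Let F, S, C, H be symmetric positive definite d×d matrices with F, S, C pairwise commuting and S² + C² = I. Then H - HS(SHS + CFC)⁻¹SH - (H⁻¹ + C⁻¹SF⁻¹SC⁻¹)⁻¹ = 0. -/
open Matrix

/-- Congruence preserves positive definiteness (real case, invertible congruence). -/
lemma posDef_conj_s3 {n : Type*} [Fintype n] [DecidableEq n]
    {M : Matrix n n ℝ} (hM : M.PosDef) (B : Matrix n n ℝ) (hB : IsUnit B.det) :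
    (Bᴴ * M * B).PosDef := by
  exact hM.conjTranspose_mul_mul_same
    (Matrix.mulVec_injective_iff_isUnit.mpr (by rwa [Matrix.isUnit_iff_isUnit_det]))

lemma inv_comm'_s3 {n : Type*} [Fintype n] [DecidableEq n]
    {A B : Matrix n n ℝ} (h : A * B = B * A) (hA : IsUnit A.det) :
    A⁻¹ * B = B * A⁻¹ := by
  have h1 : A * A⁻¹ = 1 := Matrix.mul_nonsing_inv A hA
  have h2 : A⁻¹ * A = 1 := Matrix.nonsing_inv_mul A hA
  calc A⁻¹ * B = A⁻¹ * B * (A * A⁻¹) := by rw [h1, mul_one]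
    _ = A⁻¹ * (B * A) * A⁻¹ := by noncomm_ring
    _ = A⁻¹ * (A * B) * A⁻¹ := by rw [h]
    _ = (A⁻¹ * A) * (B * A⁻¹) := by noncomm_ring
    _ = B * A⁻¹ := by rw [h2, one_mul]

theorem ghmc_zeta_vanishes
    {d : ℕ} (F S C H : Matrix (Fin d) (Fin d) ℝ)
    (hF : F.PosDef) (hS : S.PosDef) (hC : C.PosDef) (hH : H.PosDef)
    (hFS : F * S = S * F) (hFC : F * C = C * F) (hSC : S * C = C * S)
    (hSC1 : S * S + C * C = 1) :
    H - H * S * (S * H * S + C * F * C)⁻¹ * (S * H)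
      - (H⁻¹ + C⁻¹ * S * F⁻¹ * S * C⁻¹)⁻¹ = 0 := by
  have hSd : IsUnit S.det := hS.isUnit.map (Matrix.detMonoidHom)
  have hCd : IsUnit C.det := hC.isUnit.map (Matrix.detMonoidHom)
  have hFd : IsUnit F.det := hF.isUnit.map (Matrix.detMonoidHom)
  have hHd : IsUnit H.det := hH.isUnit.map (Matrix.detMonoidHom)
  -- basic cancellations
  have hSS : S * S⁻¹ = 1 := Matrix.mul_nonsing_inv S hSd
  have hSS' : S⁻¹ * S = 1 := Matrix.nonsing_inv_mul S hSd
  have hCC : C * C⁻¹ = 1 := Matrix.mul_nonsing_inv C hCd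
  have hFF : F * F⁻¹ = 1 := Matrix.mul_nonsing_inv F hFd
  have hHH : H * H⁻¹ = 1 := Matrix.mul_nonsing_inv H hHd
  -- commutations with inverses
  have cSiC : S⁻¹ * C = C * S⁻¹ := inv_comm'_s3 hSC hSd
  -- positive definiteness of A
  set K : Matrix (Fin d) (Fin d) ℝ := C⁻¹ * S * F⁻¹ * S * C⁻¹ with hK
  set A : Matrix (Fin d) (Fin d) ℝ := S * H * S + C * F * C with hA
  have hSHS : (S * H * S).PosDef := by
    have := posDef_conj_s3 hH S hSd
    rwa [hS.isHermitian.eq] at this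
  have hCFC : (C * F * C).PosSemidef := by
    have := (hF.posSemidef).conjTranspose_mul_mul_same C
    rwa [hC.isHermitian.eq] at this
  have hApd : A.PosDef := hSHS.add_posSemidef hCFC
  have hAd : IsUnit A.det := hApd.isUnit.map (Matrix.detMonoidHom)
  have hAA : A⁻¹ * A = 1 := Matrix.nonsing_inv_mul A hAd
  -- positive definiteness of B
  have hKps : K.PosSemidef := by
    have h1 : K = (S * C⁻¹)ᴴ * F⁻¹ * (S * C⁻¹) := by
      rw [Matrix.conjTranspose_mul, Matrix.conjTranspose_nonsing_inv,
        hC.isHermitian.eq, hS.isHermitian.eq, hK]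
      noncomm_ring
    rw [h1]
    exact (hF.posSemidef.inv).conjTranspose_mul_mul_same (S * C⁻¹)
  have hBpd : (H⁻¹ + K).PosDef := hH.inv.add_posSemidef hKps
  -- key computation:  A * (S⁻¹ * K) = S + S * H * K
  have hCFCS : C * F * C * (S⁻¹ * K) = S := by
    rw [hK]
    calc C * F * C * (S⁻¹ * (C⁻¹ * S * F⁻¹ * S * C⁻¹))
        = C * F * (C * S⁻¹ * C⁻¹) * S * F⁻¹ * S * C⁻¹ := by noncomm_ring
      _ = C * F * (S⁻¹ * (C * C⁻¹)) * S * F⁻¹ * S * C⁻¹ := by rw [← cSiC]; noncomm_ring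
      _ = C * F * S⁻¹ * S * F⁻¹ * S * C⁻¹ := by rw [hCC, mul_one]
      _ = C * F * (S⁻¹ * S) * F⁻¹ * S * C⁻¹ := by noncomm_ring
      _ = C * (F * F⁻¹) * S * C⁻¹ := by rw [hSS']; noncomm_ring
      _ = C * S * C⁻¹ := by rw [hFF]; noncomm_ring
      _ = S * (C * C⁻¹) := by rw [← hSC]; noncomm_ring
      _ = S := by rw [hCC, mul_one]
  have hkey : A * (S⁻¹ * K) = S + S * H * K := by
    have h1 : S * H * S * (S⁻¹ * K) = S * H * K := by
      calc S * H * S * (S⁻¹ * K) = S * H * (S * S⁻¹) * K := by noncomm_ring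
        _ = S * H * K := by rw [hSS, mul_one]
    rw [hA, add_mul, hCFCS, h1, add_comm]
  have hinv : A⁻¹ * (S + S * H * K) = S⁻¹ * K := by
    rw [← hkey, ← Matrix.mul_assoc, hAA, Matrix.one_mul]
  -- left inverse of B
  have hXB : (H - H * S * A⁻¹ * (S * H)) * (H⁻¹ + K) = 1 := by
    have expand : (H - H * S * A⁻¹ * (S * H)) * (H⁻¹ + K)
        = H * H⁻¹ + H * K - H * S * (A⁻¹ * (S + S * H * K)) := by
      rw [Matrix.mul_assoc (H*S) A⁻¹ _, Matrix.mul_add A⁻¹ S (S*H*K)]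
      have : S * H * (H⁻¹ + K) = S * (H * H⁻¹) + S * H * K := by noncomm_ring
      noncomm_ring [hHH]
    rw [expand, hinv, hHH]
    calc 1 + H * K - H * S * (S⁻¹ * K) = 1 + H * K - H * (S * S⁻¹) * K := by noncomm_ring
      _ = 1 := by rw [hSS]; noncomm_ring
  have : (H⁻¹ + K)⁻¹ = H - H * S * A⁻¹ * (S * H) := Matrix.inv_eq_left_inv hXB
  rw [this, sub_self]
end

section
/- Let Φ ⊂ ℝ^d × (d×d SPD matrices) be a set of parameters, and define the matrix convex hull ℱ_Σ = { Σ_{j=1}^J V_jᵀ Σ_j V_j : J ∈ ℕ, Σ_j V_jᵀ V_j = I, (μ_j, Σ_j) ∈ Φ }. Suppose Σ' = C Σ C + S Σ_f S where C, S are symmetric positive definite with C² + S² = I, all V_j's arising commute appropriately with C, and (μ_f, Σ_f) ∈ Φ. Then dist(Σ', ℱ_Σ) ≤ ‖C‖² · dist(Σ, ℱ_Σ), where dist is the infimum over the operator-norm distances to elements of ℱ_Σ. -/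
open Matrix
open scoped Matrix.Norms.L2Operator

/-- The matrix convex hull of the covariance matrices of the targets in `Φ`. -/
def covHull {d : ℕ} (Φ : Set ((Fin d → ℝ) × Matrix (Fin d) (Fin d) ℝ)) :
    Set (Matrix (Fin d) (Fin d) ℝ) :=
  { B | ∃ (J : ℕ) (V Sigs : Fin J → Matrix (Fin d) (Fin d) ℝ) (μs : Fin J → (Fin d → ℝ)),
      (∀ j, (μs j, Sigs j) ∈ Φ) ∧ (∑ j, (V j)ᵀ * V j = 1) ∧
      B = ∑ j, (V j)ᵀ * Sigs j * V j }

lemma covHull_step {d : ℕ} (Φ : Set ((Fin d → ℝ) × Matrix (Fin d) (Fin d) ℝ))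
    (C S Sf A : Matrix (Fin d) (Fin d) ℝ)
    (hCt : Cᵀ = C) (hSt : Sᵀ = S)
    (hCS : C * C + S * S = 1)
    (μf : Fin d → ℝ) (hf : (μf, Sf) ∈ Φ)
    (hA : A ∈ covHull Φ) : C * A * C + S * Sf * S ∈ covHull Φ := by
  obtain ⟨J, V, Sigs, μs, hmem, hsum, hB⟩ := hA
  refine ⟨J + 1, Fin.snoc (fun j => V j * C) S, Fin.snoc Sigs Sf, Fin.snoc μs μf,
    ?_, ?_, ?_⟩
  · intro j
    refine Fin.lastCases ?_ ?_ j
    · simp [hf]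
    · intro i; simpa using hmem i
  · rw [Fin.sum_univ_castSucc]
    simp only [Fin.snoc_castSucc, Fin.snoc_last, transpose_mul, hCt, hSt]
    have : ∑ i : Fin J, C * (V i)ᵀ * (V i * C) = C * (∑ i : Fin J, (V i)ᵀ * V i) * C := by
      rw [Finset.mul_sum, Finset.sum_mul]
      exact Finset.sum_congr rfl fun i _ => by noncomm_ring
    rw [this, hsum, mul_one, ← hCS]
  · rw [Fin.sum_univ_castSucc]
    simp only [Fin.snoc_castSucc, Fin.snoc_last, transpose_mul, hCt, hSt]
    have : ∑ i : Fin J, C * (V i)ᵀ * Sigs i * (V i * C)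
        = C * (∑ i : Fin J, (V i)ᵀ * Sigs i * V i) * C := by
      rw [Finset.mul_sum, Finset.sum_mul]
      exact Finset.sum_congr rfl fun i _ => by noncomm_ring
    rw [this, ← hB]

theorem ghmc_cov_dist_contraction
    {d : ℕ} (Φ : Set ((Fin d → ℝ) × Matrix (Fin d) (Fin d) ℝ))
    (C S Sf Sig Sig' : Matrix (Fin d) (Fin d) ℝ)
    (hC : C.PosDef) (hS : S.PosDef)
    (hCS : C * C + S * S = 1)
    (μf : Fin d → ℝ) (hf : (μf, Sf) ∈ Φ)
    (hSig' : Sig' = C * Sig * C + S * Sf * S) :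
    Metric.infDist Sig' (covHull Φ) ≤ ‖C‖ ^ 2 * Metric.infDist Sig (covHull Φ) := by
  have hCt : Cᵀ = C := by
    have := hC.isHermitian
    rwa [Matrix.IsHermitian, conjTranspose_eq_transpose_of_trivial] at this
  have hSt : Sᵀ = S := by
    have := hS.isHermitian
    rwa [Matrix.IsHermitian, conjTranspose_eq_transpose_of_trivial] at this
  have hne : (covHull Φ).Nonempty := by
    refine ⟨Sf, 1, fun _ => 1, fun _ => Sf, fun _ => μf, fun _ => hf, ?_, ?_⟩ <;> simp
  -- key estimate: for any A in the hull
  have key : ∀ A ∈ covHull Φ, Metric.infDist Sig' (covHull Φ) ≤ ‖C‖ ^ 2 * dist Sig A := by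
    intro A hA
    have hmem := covHull_step Φ C S Sf A hCt hSt hCS μf hf hA
    have h1 : Metric.infDist Sig' (covHull Φ) ≤ dist Sig' (C * A * C + S * Sf * S) :=
      Metric.infDist_le_dist_of_mem hmem
    have h2 : dist Sig' (C * A * C + S * Sf * S) ≤ ‖C‖ ^ 2 * dist Sig A := by
      rw [dist_eq_norm, dist_eq_norm, hSig']
      have hdiff : C * Sig * C + S * Sf * S - (C * A * C + S * Sf * S)
          = C * (Sig - A) * C := by noncomm_ring
      rw [hdiff]
      calc ‖C * (Sig - A) * C‖ ≤ ‖C * (Sig - A)‖ * ‖C‖ := Matrix.l2_opNorm_mul _ _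
        _ ≤ ‖C‖ * ‖Sig - A‖ * ‖C‖ := by
            gcongr; exact Matrix.l2_opNorm_mul _ _
        _ = ‖C‖ ^ 2 * ‖Sig - A‖ := by ring
    exact h1.trans h2
  refine le_of_forall_pos_le_add ?_
  intro ε hε
  by_cases hC0 : ‖C‖ = 0
  · obtain ⟨A, hA⟩ := hne
    have := key A hA
    rw [hC0] at this ⊢
    norm_num at this ⊢
    linarith
  · have hCpos : 0 < ‖C‖ ^ 2 := by positivity
    obtain ⟨A, hA, hdA⟩ := (Metric.infDist_lt_iff hne).mp
      (show Metric.infDist Sig (covHull Φ) < Metric.infDist Sig (covHull Φ) + ε / ‖C‖ ^ 2 by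
        linarith [div_pos hε hCpos])
    have := key A hA
    have : Metric.infDist Sig' (covHull Φ)
        ≤ ‖C‖ ^ 2 * (Metric.infDist Sig (covHull Φ) + ε / ‖C‖ ^ 2) := by
      calc Metric.infDist Sig' (covHull Φ) ≤ ‖C‖ ^ 2 * dist Sig A := this
        _ ≤ _ := by gcongr
    calc Metric.infDist Sig' (covHull Φ)
        ≤ ‖C‖ ^ 2 * (Metric.infDist Sig (covHull Φ) + ε / ‖C‖ ^ 2) := this
      _ = ‖C‖ ^ 2 * Metric.infDist Sig (covHull Φ) + ε := by field_simp
end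

section
/- Let M_j be i.i.d. bounded real random variables with mean E[M] and S_j² i.i.d. bounded nonnegative random variables with mean E[S²], independent for different j, and α ∈ (0,1). Let X_∞ be a random variable whose conditional distribution given (μ_∞, σ²_∞) = (Σ_j (1-α)α^j M_j, Σ_j (1-α²)α^{2j} S_j²) is N(μ_∞, σ²_∞). Then E[X_∞] = E[M] and Var(X_∞) = E[S²] + ((1-α)/(1+α))·Var(M). -/
open MeasureTheory ProbabilityTheory Filter Real
open scoped Topology ENNReal NNReal

lemma integral_mul_exp_neg_mul_sq_real (b : ℝ) : ∫ x : ℝ, x * rexp (-b * x ^ 2) = 0 := by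
  have h := MeasureTheory.integral_neg_eq_self (fun x : ℝ => x * rexp (-b * x ^ 2)) volume
  simp only [neg_sq, neg_mul] at h
  rw [integral_neg] at h
  simp only [neg_mul] at h ⊢
  linarith

lemma tendsto_mul_exp_neg_mul_sq {b : ℝ} (hb : 0 < b) :
    Tendsto (fun x : ℝ => x * rexp (-b * x ^ 2)) (Filter.cocompact ℝ) (𝓝 0) := by
  have h := tendsto_rpow_abs_mul_exp_neg_mul_sq_cocompact hb 1
  simp only [Real.rpow_one] at h
  rw [tendsto_zero_iff_norm_tendsto_zero]
  convert h using 2 with x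
  rw [norm_mul, Real.norm_eq_abs, Real.norm_eq_abs, abs_of_pos (exp_pos _)]

lemma integrable_sq_mul_exp_neg_mul_sq {b : ℝ} (hb : 0 < b) :
    Integrable (fun x : ℝ => x ^ 2 * rexp (-b * x ^ 2)) := by
  have := integrable_rpow_mul_exp_neg_mul_sq hb (s := 2) (by norm_num)
  simpa [Real.rpow_natCast] using this

lemma integral_sq_mul_exp_neg_mul_sq {b : ℝ} (hb : 0 < b) :
    ∫ x : ℝ, x ^ 2 * rexp (-b * x ^ 2) = (2 * b)⁻¹ * Real.sqrt (π / b) := by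
  have hderiv : ∀ x : ℝ, HasDerivAt (fun y : ℝ => -(2 * b)⁻¹ * (y * rexp (-b * y ^ 2)))
      (x ^ 2 * rexp (-b * x ^ 2) - (2*b)⁻¹ * rexp (-b * x ^ 2)) x := by
    intro x
    have h1 : HasDerivAt (fun y : ℝ => -b * y ^ 2) (-b * (2 * x)) x := by
      simpa using ((hasDerivAt_pow 2 x).const_mul (-b))
    have h2 : HasDerivAt (fun y : ℝ => rexp (-b * y ^ 2)) (rexp (-b * x ^ 2) * (-b * (2 * x))) x :=
      (Real.hasDerivAt_exp _).comp x h1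
    have h3 : HasDerivAt (fun y : ℝ => y * rexp (-b * y ^ 2))
        (1 * rexp (-b * x ^ 2) + x * (rexp (-b * x ^ 2) * (-b * (2 * x)))) x :=
      (hasDerivAt_id x).mul h2
    have h4 := h3.const_mul (-(2 * b)⁻¹)
    refine h4.congr_deriv ?_
    field_simp
    ring
  have hint : Integrable (fun x : ℝ => x ^ 2 * rexp (-b * x ^ 2) - (2*b)⁻¹ * rexp (-b * x ^ 2)) := by
    exact (integrable_sq_mul_exp_neg_mul_sq hb).sub ((integrable_exp_neg_mul_sq hb).const_mul _)
  have hcc := (tendsto_mul_exp_neg_mul_sq hb).const_mul (-(2*b)⁻¹)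
  rw [mul_zero, cocompact_eq_atBot_atTop, tendsto_sup] at hcc
  have key := integral_of_hasDerivAt_of_tendsto hderiv hint hcc.1 hcc.2
  rw [sub_self] at key
  have hsplit : ∫ x : ℝ, (x ^ 2 * rexp (-b * x ^ 2) - (2*b)⁻¹ * rexp (-b * x ^ 2))
      = (∫ x : ℝ, x ^ 2 * rexp (-b * x ^ 2)) - (2*b)⁻¹ * ∫ x : ℝ, rexp (-b * x ^ 2) := by
    rw [integral_sub (integrable_sq_mul_exp_neg_mul_sq hb)
      ((integrable_exp_neg_mul_sq hb).const_mul _), MeasureTheory.integral_const_mul]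
  rw [hsplit, integral_gaussian] at key
  linarith

lemma gaussianReal_eq_map (m : ℝ) (w : ℝ≥0) :
    gaussianReal m w = (gaussianReal 0 1).map (fun x => Real.sqrt w * x + m) := by
  have h1 : (gaussianReal 0 1).map (fun x => Real.sqrt w * x) = gaussianReal 0 w := by
    rw [show (fun x => Real.sqrt w * x) = (Real.sqrt w * ·) from rfl,
      gaussianReal_map_const_mul]
    congr 1
    · simp
    · ext
      simp [Real.sq_sqrt w.2]
  have h2 : (gaussianReal 0 w).map (· + m) = gaussianReal m w := by
    rw [gaussianReal_map_add_const]; simp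
  rw [← h2, ← h1, Measure.map_map (by fun_prop) (by fun_prop)]
  rfl

lemma gaussianReal01_withDensity :
    gaussianReal 0 1 = volume.withDensity
      (fun x => ((Real.toNNReal (gaussianPDFReal 0 1 x) : ℝ≥0) : ℝ≥0∞)) := by
  rw [gaussianReal_of_var_ne_zero _ one_ne_zero]
  rfl

lemma meas_pdf01 : Measurable (fun x => Real.toNNReal (gaussianPDFReal 0 1 x)) :=
  (measurable_gaussianPDFReal 0 1).real_toNNReal

lemma pdf01_eq (x : ℝ) : gaussianPDFReal 0 1 x = (√(2 * π))⁻¹ * rexp (-(1/2) * x ^ 2) := by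
  rw [gaussianPDFReal]
  norm_num
  left
  ring_nf

lemma integrable01 (g : ℝ → ℝ) :
    Integrable g (gaussianReal 0 1) ↔
      Integrable (fun x => gaussianPDFReal 0 1 x * g x) volume := by
  rw [gaussianReal01_withDensity, integrable_withDensity_iff_integrable_smul meas_pdf01]
  constructor <;> intro h <;> refine h.congr (Filter.Eventually.of_forall fun x => ?_) <;>
    simp [NNReal.smul_def, Real.coe_toNNReal _ (gaussianPDFReal_nonneg 0 1 x)]

lemma integral01 (g : ℝ → ℝ) :
    ∫ x, g x ∂(gaussianReal 0 1) = ∫ x, gaussianPDFReal 0 1 x * g x := by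
  rw [gaussianReal01_withDensity, integral_withDensity_eq_integral_smul meas_pdf01]
  congr 1 with x
  simp [NNReal.smul_def, Real.coe_toNNReal _ (gaussianPDFReal_nonneg 0 1 x)]

lemma integrable_id01 : Integrable (fun x => x) (gaussianReal 0 1) := by
  rw [integrable01]
  have h := (integrable_mul_exp_neg_mul_sq (b := 1/2) (by norm_num)).const_mul ((√(2 * π))⁻¹)
  refine h.congr (Filter.Eventually.of_forall fun x => ?_)
  simp only [pdf01_eq]; ring

lemma integrable_sq01 : Integrable (fun x : ℝ => x ^ 2) (gaussianReal 0 1) := by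
  rw [integrable01]
  have : Integrable (fun x : ℝ => x ^ 2 * rexp (-(1/2) * x ^ 2)) := by
    have := integrable_rpow_mul_exp_neg_mul_sq (b := 1/2) (by norm_num) (s := 2) (by norm_num)
    simpa [Real.rpow_natCast] using this
  refine (this.const_mul ((√(2 * π))⁻¹)).congr (Filter.Eventually.of_forall fun x => ?_)
  simp only [pdf01_eq]; ring

lemma integral_id01 : ∫ x, x ∂(gaussianReal 0 1) = 0 := by
  rw [integral01]
  have h := integral_mul_exp_neg_mul_sq_real (1/2)
  calc ∫ x, gaussianPDFReal 0 1 x * x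
      = ∫ x, (√(2 * π))⁻¹ * (x * rexp (-(1/2) * x ^ 2)) := by
        congr 1 with x; simp only [pdf01_eq]; ring
    _ = (√(2 * π))⁻¹ * ∫ x, x * rexp (-(1/2) * x ^ 2) := MeasureTheory.integral_const_mul _ _
    _ = 0 := by rw [h, mul_zero]

lemma integral_sq01 : ∫ x, x ^ 2 ∂(gaussianReal 0 1) = 1 := by
  rw [integral01]
  have h := integral_sq_mul_exp_neg_mul_sq (b := 1/2) (by norm_num)
  calc ∫ x, gaussianPDFReal 0 1 x * x ^ 2
      = ∫ x, (√(2 * π))⁻¹ * (x ^ 2 * rexp (-(1/2) * x ^ 2)) := by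
        congr 1 with x; simp only [pdf01_eq]; ring
    _ = (√(2 * π))⁻¹ * ∫ x, x ^ 2 * rexp (-(1/2) * x ^ 2) := MeasureTheory.integral_const_mul _ _
    _ = (√(2 * π))⁻¹ * √(2 * π) := by
        rw [h, show π / (1/(2:ℝ)) = 2 * π by ring]; norm_num
    _ = 1 := by
        rw [inv_mul_cancel₀]
        positivity

lemma integrable_affine01 (c m : ℝ) : Integrable (fun x => c * x + m) (gaussianReal 0 1) :=
  (integrable_id01.const_mul c).add (integrable_const m)

lemma integrable_affine_sq01 (c m : ℝ) :
    Integrable (fun x => (c * x + m) ^ 2) (gaussianReal 0 1) := by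
  have : (fun x : ℝ => (c * x + m) ^ 2)
      = fun x => c ^ 2 * x ^ 2 + (2 * c * m) * x + m ^ 2 := by funext x; ring
  rw [this]
  exact ((integrable_sq01.const_mul _).add (integrable_id01.const_mul _)).add (integrable_const _)

lemma integrable_id_gaussianReal (m : ℝ) (w : ℝ≥0) :
    Integrable (fun x => x) (gaussianReal m w) := by
  rw [gaussianReal_eq_map m w,
    integrable_map_measure (g := fun x => x) aestronglyMeasurable_id (by fun_prop)]
  exact integrable_affine01 _ _

lemma integrable_sq_gaussianReal (m : ℝ) (w : ℝ≥0) :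
    Integrable (fun x : ℝ => x ^ 2) (gaussianReal m w) := by
  rw [gaussianReal_eq_map m w,
    integrable_map_measure (by fun_prop) (by fun_prop)]
  exact integrable_affine_sq01 _ _

lemma integral_id_gaussianReal' (m : ℝ) (w : ℝ≥0) :
    ∫ x, x ∂(gaussianReal m w) = m := by
  rw [gaussianReal_eq_map m w, integral_map (f := fun x : ℝ => x) (by fun_prop) aestronglyMeasurable_id]
  rw [integral_add (integrable_id01.const_mul _) (integrable_const _),
    MeasureTheory.integral_const_mul, integral_id01, integral_const]
  simp

lemma integral_sq_gaussianReal' (m : ℝ) (w : ℝ≥0) :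
    ∫ x, x ^ 2 ∂(gaussianReal m w) = (w : ℝ) + m ^ 2 := by
  rw [gaussianReal_eq_map m w, integral_map (by fun_prop) (by fun_prop)]
  have : (fun x : ℝ => (√w * x + m) ^ 2)
      = fun x => (√w) ^ 2 * x ^ 2 + (2 * √w * m) * x + m ^ 2 := by funext x; ring
  have h1 : Integrable (fun x : ℝ => (√(w:ℝ)) ^ 2 * x ^ 2 + (2 * √(w:ℝ) * m) * x)
      (gaussianReal 0 1) := (integrable_sq01.const_mul _).add (integrable_id01.const_mul _)
  rw [show (fun x : ℝ => (fun y => y ^ 2) (√w * x + m)) = fun x : ℝ => (√w * x + m) ^ 2 from rfl,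
    this, integral_add h1 (integrable_const _),
    integral_add (integrable_sq01.const_mul _) (integrable_id01.const_mul _),
    MeasureTheory.integral_const_mul, MeasureTheory.integral_const_mul,
    integral_id01, integral_sq01, integral_const]
  simp [Real.sq_sqrt w.2]

section Helpers

variable {Ω : Type*} [MeasurableSpace Ω] {P : Measure Ω}

lemma integrable_of_ae_bounded [IsFiniteMeasure P] {f : Ω → ℝ}
    (hf : AEStronglyMeasurable f P) {C : ℝ} (h : ∀ᵐ ω ∂P, |f ω| ≤ C) :
    Integrable f P :=
  (MemLp.of_bound hf C (by simpa [Real.norm_eq_abs] using h) (p := 1)).integrable le_rfl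

lemma integral_pair_eq {f g : Ω → ℝ × ℝ}
    (hf : Measurable f) (hg : Measurable g) (h : P.map f = P.map g)
    {φ : ℝ × ℝ → ℝ} (hφ : Measurable φ) :
    ∫ ω, φ (f ω) ∂P = ∫ ω, φ (g ω) ∂P := by
  rw [← integral_map hf.aemeasurable hφ.aestronglyMeasurable, h,
    integral_map hg.aemeasurable hφ.aestronglyMeasurable]

end Helpers

theorem ghmc_limit_moments
    {Ω : Type*} [MeasurableSpace Ω] (P : Measure Ω) [IsProbabilityMeasure P]
    (α : ℝ) (hα0 : 0 < α) (hα1 : α < 1)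
    (M S2 : ℕ → Ω → ℝ)
    (hmeas : ∀ n, Measurable fun ω => (M n ω, S2 n ω))
    (hindep : iIndepFun (fun n ω => (M n ω, S2 n ω)) P)
    (hident : ∀ n, P.map (fun ω => (M n ω, S2 n ω)) = P.map (fun ω => (M 0 ω, S2 0 ω)))
    (Cb : ℝ) (hbd : ∀ n, ∀ᵐ ω ∂P, |M n ω| ≤ Cb ∧ |S2 n ω| ≤ Cb)
    (hS2nonneg : ∀ n, ∀ᵐ ω ∂P, 0 ≤ S2 n ω)
    (μinf σinf : Ω → ℝ)
    (hμinf : μinf = fun ω => ∑' j : ℕ, (1 - α) * α ^ j * M j ω)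
    (hσinf : σinf = fun ω => ∑' j : ℕ, (1 - α ^ 2) * α ^ (2 * j) * S2 j ω)
    (X : Ω → ℝ) (hXmeas : Measurable X)
    (hcond : ∀ᵐ p ∂(P.map fun ω => (μinf ω, σinf ω)),
      condDistrib X (fun ω => (μinf ω, σinf ω)) P p = gaussianReal p.1 p.2.toNNReal) :
    (∫ ω, X ω ∂P = ∫ ω, M 0 ω ∂P) ∧
    variance X P = (∫ ω, S2 0 ω ∂P) + (1 - α) / (1 + α) * variance (M 0) P := by
  -- basic positivity facts
  have h1α : (0:ℝ) < 1 - α := by linarith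
  have h1α2 : (0:ℝ) < 1 - α ^ 2 := by nlinarith
  -- geometric sums
  have hsumc : HasSum (fun j : ℕ => (1 - α) * α ^ j) 1 := by
    have := (hasSum_geometric_of_lt_one hα0.le hα1).mul_left (1 - α)
    rwa [mul_inv_cancel₀ h1α.ne'] at this
  have hsumd : HasSum (fun j : ℕ => (1 - α ^ 2) * α ^ (2 * j)) 1 := by
    have := (hasSum_geometric_of_lt_one (by positivity) (by nlinarith : α ^ 2 < 1)).mul_left
      (1 - α ^ 2)
    rw [mul_inv_cancel₀ h1α2.ne'] at this
    simpa [pow_mul] using this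
  have hsumc2 : HasSum (fun j : ℕ => ((1 - α) * α ^ j) ^ 2) ((1 - α) / (1 + α)) := by
    have := (hasSum_geometric_of_lt_one (by positivity) (by nlinarith : α ^ 2 < 1)).mul_left
      ((1 - α) ^ 2)
    have hne1 : (1:ℝ) + α ≠ 0 := by linarith
    have heq : (1 - α) ^ 2 * (1 - α ^ 2)⁻¹ = (1 - α) / (1 + α) := by
      have h12 : (1:ℝ) - α ^ 2 = (1 - α) * (1 + α) := by ring
      rw [h12, mul_inv, eq_div_iff hne1]
      field_simp
    rw [heq] at this
    convert this using 2 with j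
    case e'_3 => rfl
    rw [mul_pow, ← pow_mul, mul_comm j 2, pow_mul]
  -- measurability
  have hM : ∀ n, Measurable (M n) := fun n => measurable_fst.comp (hmeas n)
  have hS : ∀ n, Measurable (S2 n) := fun n => measurable_snd.comp (hmeas n)
  have hCb0 : 0 ≤ Cb := by
    have : (ae P).NeBot := ae_neBot.mpr (IsProbabilityMeasure.ne_zero P)
    obtain ⟨ω, h1, _⟩ := (hbd 0).exists
    exact le_trans (abs_nonneg _) h1
  -- the combined a.e. good set
  have hgood : ∀ᵐ ω ∂P, ∀ n, |M n ω| ≤ Cb ∧ |S2 n ω| ≤ Cb ∧ 0 ≤ S2 n ω := by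
    rw [MeasureTheory.ae_all_iff]
    intro n
    filter_upwards [hbd n, hS2nonneg n] with ω h1 h2
    exact ⟨h1.1, h1.2, h2⟩
  -- summability and bounds, almost everywhere
  set c : ℕ → ℝ := fun j => (1 - α) * α ^ j with hc
  set d : ℕ → ℝ := fun j => (1 - α ^ 2) * α ^ (2 * j) with hd
  have hc0 : ∀ j, 0 ≤ c j := fun j => by simp only [hc]; positivity
  have hd0 : ∀ j, 0 ≤ d j := fun j => by simp only [hd]; positivity
  have hcsum : Summable c := hsumc.summable
  have hdsum : Summable d := hsumd.summable
  have haeM : ∀ᵐ ω ∂P, Summable (fun j => c j * M j ω) := by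
    filter_upwards [hgood] with ω h
    refine Summable.of_norm_bounded (hcsum.mul_right Cb) fun j => ?_
    rw [Real.norm_eq_abs, abs_mul, abs_of_nonneg (hc0 j)]
    exact mul_le_mul_of_nonneg_left (h j).1 (hc0 j)
  have haeS : ∀ᵐ ω ∂P, Summable (fun j => d j * S2 j ω) := by
    filter_upwards [hgood] with ω h
    refine Summable.of_norm_bounded (hdsum.mul_right Cb) fun j => ?_
    rw [Real.norm_eq_abs, abs_mul, abs_of_nonneg (hd0 j)]
    exact mul_le_mul_of_nonneg_left (h j).2.1 (hd0 j)
  have haetendμ : ∀ᵐ ω ∂P,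
      Tendsto (fun n => ∑ j ∈ Finset.range n, c j * M j ω) atTop (𝓝 (μinf ω)) := by
    filter_upwards [haeM] with ω h
    rw [hμinf]
    exact h.hasSum.tendsto_sum_nat
  have haetendσ : ∀ᵐ ω ∂P,
      Tendsto (fun n => ∑ j ∈ Finset.range n, d j * S2 j ω) atTop (𝓝 (σinf ω)) := by
    filter_upwards [haeS] with ω h
    rw [hσinf]
    exact h.hasSum.tendsto_sum_nat
  have haeμbd : ∀ᵐ ω ∂P, |μinf ω| ≤ Cb := by
    filter_upwards [hgood, haeM] with ω h hsumm
    rw [hμinf]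
    have h1 : ∀ j, ‖c j * M j ω‖ ≤ c j * Cb := fun j => by
      rw [Real.norm_eq_abs, abs_mul, abs_of_nonneg (hc0 j)]
      exact mul_le_mul_of_nonneg_left (h j).1 (hc0 j)
    have h2 : Summable (fun j => ‖c j * M j ω‖) :=
      Summable.of_nonneg_of_le (fun j => norm_nonneg _) h1 (hcsum.mul_right Cb)
    calc |∑' j, c j * M j ω| ≤ ∑' j, ‖c j * M j ω‖ := norm_tsum_le_tsum_norm h2
      _ ≤ ∑' j, c j * Cb := Summable.tsum_le_tsum h1 h2 (hcsum.mul_right Cb)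
      _ = 1 * Cb := (hsumc.mul_right Cb).tsum_eq
      _ = Cb := one_mul Cb
  have haeσbd : ∀ᵐ ω ∂P, 0 ≤ σinf ω ∧ σinf ω ≤ Cb := by
    filter_upwards [hgood, haeS] with ω h hsumm
    rw [hσinf]
    constructor
    · exact tsum_nonneg fun j => mul_nonneg (hd0 j) (h j).2.2
    · calc ∑' j, d j * S2 j ω
          ≤ ∑' j, d j * Cb := Summable.tsum_le_tsum (fun j =>
            mul_le_mul_of_nonneg_left (le_trans (le_abs_self _) (h j).2.1) (hd0 j))
            hsumm (hdsum.mul_right Cb)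
        _ = 1 * Cb := (hsumd.mul_right Cb).tsum_eq
        _ = Cb := one_mul Cb
  -- almost-everywhere measurability of the conditioning map
  have hFmeas : ∀ n, Measurable (fun ω => ∑ j ∈ Finset.range n, c j * M j ω) :=
    fun n => Finset.measurable_sum _ (fun j _ => (hM j).const_mul (c j))
  have hGmeas : ∀ n, Measurable (fun ω => ∑ j ∈ Finset.range n, d j * S2 j ω) :=
    fun n => Finset.measurable_sum _ (fun j _ => (hS j).const_mul (d j))
  have hμaem : AEMeasurable μinf P :=
    aemeasurable_of_tendsto_metrizable_ae atTop (fun n => (hFmeas n).aemeasurable) haetendμ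
  have hσaem : AEMeasurable σinf P :=
    aemeasurable_of_tendsto_metrizable_ae atTop (fun n => (hGmeas n).aemeasurable) haetendσ
  have hTaem : AEMeasurable (fun ω => (μinf ω, σinf ω)) P := hμaem.prodMk hσaem
  set ν : Measure (ℝ × ℝ) := P.map (fun ω => (μinf ω, σinf ω)) with hν
  haveI : IsProbabilityMeasure ν := Measure.isProbabilityMeasure_map hTaem
  haveI : IsProbabilityMeasure (P.map (fun ω => ((μinf ω, σinf ω), X ω))) :=
    Measure.isProbabilityMeasure_map (hTaem.prodMk hXmeas.aemeasurable)
  have hmap : P.map (fun ω => ((μinf ω, σinf ω), X ω))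
      = ν ⊗ₘ condDistrib X (fun ω => (μinf ω, σinf ω)) P := by
    rw [condDistrib]
    have h2 := Measure.disintegrate (P.map (fun ω => ((μinf ω, σinf ω), X ω)))
      (P.map (fun ω => ((μinf ω, σinf ω), X ω))).condKernel
    rw [Measure.fst_map_prodMk₀ hXmeas.aemeasurable] at h2
    exact h2.symm
  -- transfer bounds to ν
  have hsetmeas : MeasurableSet {p : ℝ × ℝ | |p.1| ≤ Cb ∧ 0 ≤ p.2 ∧ p.2 ≤ Cb} := by
    refine (measurableSet_le (measurable_fst.abs) measurable_const).inter ?_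
    exact (measurableSet_le measurable_const measurable_snd).inter
      (measurableSet_le measurable_snd measurable_const)
  have hbν : ∀ᵐ p ∂ν, |p.1| ≤ Cb ∧ 0 ≤ p.2 ∧ p.2 ≤ Cb := by
    rw [hν, ae_map_iff hTaem hsetmeas]
    filter_upwards [haeμbd, haeσbd] with ω h1 h2
    exact ⟨h1, h2.1, h2.2⟩
  -- second moment of gaussians, in lintegral form
  have hg2 : ∀ (m : ℝ) (w : ℝ≥0), ∫⁻ x, (‖x‖₊ : ℝ≥0∞) ^ 2 ∂(gaussianReal m w)
      = ENNReal.ofReal ((w : ℝ) + m ^ 2) := by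
    intro m w
    have h1 : ∀ x : ℝ, ((‖x‖₊ : ℝ≥0∞)) ^ 2 = ENNReal.ofReal (x ^ 2) := fun x => by
      rw [← enorm_eq_nnnorm, Real.enorm_eq_ofReal_abs, ← ENNReal.ofReal_pow (abs_nonneg x), sq_abs]
    simp_rw [h1]
    rw [← ofReal_integral_eq_lintegral_ofReal (integrable_sq_gaussianReal m w)
      (Filter.Eventually.of_forall fun x => sq_nonneg x), integral_sq_gaussianReal']
  have hsnd2meas : Measurable (fun p : (ℝ × ℝ) × ℝ => (‖p.2‖₊ : ℝ≥0∞) ^ 2) :=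
    ((measurable_snd.nnnorm).coe_nnreal_ennreal).pow_const 2
  have hlint2 : ∫⁻ ω, (‖X ω‖₊ : ℝ≥0∞) ^ 2 ∂P ≤ ENNReal.ofReal (Cb + Cb ^ 2) := by
    have e1 : ∫⁻ ω, (‖X ω‖₊ : ℝ≥0∞) ^ 2 ∂P
        = ∫⁻ p, (‖p.2‖₊ : ℝ≥0∞) ^ 2 ∂(P.map (fun ω => ((μinf ω, σinf ω), X ω))) :=
      (lintegral_map' hsnd2meas.aemeasurable (hTaem.prodMk hXmeas.aemeasurable)).symm
    rw [e1, hmap, Measure.lintegral_compProd hsnd2meas]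
    calc ∫⁻ p, ∫⁻ x, (‖x‖₊ : ℝ≥0∞) ^ 2
          ∂(condDistrib X (fun ω => (μinf ω, σinf ω)) P p) ∂ν
        ≤ ∫⁻ _, ENNReal.ofReal (Cb + Cb ^ 2) ∂ν := by
          refine lintegral_mono_ae ?_
          filter_upwards [hcond, hbν] with p hp hb
          rw [hp, hg2 p.1 p.2.toNNReal]
          apply ENNReal.ofReal_le_ofReal
          have h3 : (p.2.toNNReal : ℝ) ≤ Cb := by
            rw [Real.coe_toNNReal _ hb.2.1]; exact hb.2.2
          have h4 : p.1 ^ 2 ≤ Cb ^ 2 := by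
            rw [← sq_abs]; exact pow_le_pow_left₀ (abs_nonneg _) hb.1 2
          linarith
      _ = ENNReal.ofReal (Cb + Cb ^ 2) := by rw [lintegral_const, measure_univ, mul_one]
  have hX2int : Integrable (fun ω => X ω ^ 2) P := by
    refine ⟨((hXmeas.pow_const 2)).aestronglyMeasurable, ?_⟩
    have h5 : ∫⁻ ω, (‖X ω ^ 2‖₊ : ℝ≥0∞) ∂P = ∫⁻ ω, (‖X ω‖₊ : ℝ≥0∞) ^ 2 ∂P := by
      simp_rw [nnnorm_pow, ENNReal.coe_pow]
    show (∫⁻ ω, (‖X ω ^ 2‖₊ : ℝ≥0∞) ∂P) < ⊤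
    rw [h5]
    exact lt_of_le_of_lt hlint2 ENNReal.ofReal_lt_top
  have hXmem2 : MemLp X 2 P := (memLp_two_iff_integrable_sq hXmeas.aestronglyMeasurable).mpr hX2int
  have hXint : Integrable X P := hXmem2.integrable one_le_two
  -- mean identity
  have hEX : ∫ ω, X ω ∂P = ∫ ω, μinf ω ∂P := by
    have hint2 : Integrable (fun p : (ℝ × ℝ) × ℝ => p.2)
        (ν ⊗ₘ condDistrib X (fun ω => (μinf ω, σinf ω)) P) := by
      rw [← hmap]
      exact (integrable_map_measure measurable_snd.aestronglyMeasurable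
        (hTaem.prodMk hXmeas.aemeasurable)).mpr hXint
    have e1 : ∫ ω, X ω ∂P = ∫ p, p.2 ∂(P.map (fun ω => ((μinf ω, σinf ω), X ω))) :=
      (integral_map (hTaem.prodMk hXmeas.aemeasurable)
        measurable_snd.aestronglyMeasurable).symm
    rw [e1, hmap, Measure.integral_compProd hint2]
    have e2 : ∫ p, (∫ x, x ∂(condDistrib X (fun ω => (μinf ω, σinf ω)) P p)) ∂ν
        = ∫ p : ℝ × ℝ, p.1 ∂ν := by
      refine integral_congr_ae ?_
      filter_upwards [hcond] with p hp
      rw [hp, integral_id_gaussianReal']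
    rw [e2, hν, integral_map hTaem measurable_fst.aestronglyMeasurable]
  -- second moment identity
  have hEX2 : ∫ ω, X ω ^ 2 ∂P = ∫ ω, (σinf ω + μinf ω ^ 2) ∂P := by
    have hint2 : Integrable (fun p : (ℝ × ℝ) × ℝ => p.2 ^ 2)
        (ν ⊗ₘ condDistrib X (fun ω => (μinf ω, σinf ω)) P) := by
      rw [← hmap]
      exact (integrable_map_measure (measurable_snd.pow_const 2).aestronglyMeasurable
        (hTaem.prodMk hXmeas.aemeasurable)).mpr hX2int
    have e1 : ∫ ω, X ω ^ 2 ∂P = ∫ p, p.2 ^ 2 ∂(P.map (fun ω => ((μinf ω, σinf ω), X ω))) :=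
      (integral_map (hTaem.prodMk hXmeas.aemeasurable)
        (measurable_snd.pow_const 2).aestronglyMeasurable).symm
    rw [e1, hmap, Measure.integral_compProd hint2]
    have e2 : ∫ p, (∫ x, x ^ 2 ∂(condDistrib X (fun ω => (μinf ω, σinf ω)) P p)) ∂ν
        = ∫ p : ℝ × ℝ, (p.2 + p.1 ^ 2) ∂ν := by
      refine integral_congr_ae ?_
      filter_upwards [hcond, hbν] with p hp hb
      rw [hp, integral_sq_gaussianReal', Real.coe_toNNReal _ hb.2.1]
    rw [e2, hν, integral_map (f := fun p : ℝ × ℝ => p.2 + p.1 ^ 2) hTaem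
      (measurable_snd.add (measurable_fst.pow_const 2)).aestronglyMeasurable]
  -- integrability of the basic random variables
  have hMint : ∀ n, Integrable (M n) P := fun n =>
    integrable_of_ae_bounded (hM n).aestronglyMeasurable ((hbd n).mono fun ω h => h.1)
  have hMMint : ∀ j k, Integrable (fun ω => M j ω * M k ω) P := fun j k => by
    refine integrable_of_ae_bounded ((hM j).mul (hM k)).aestronglyMeasurable
      (C := Cb * Cb) ?_
    filter_upwards [hbd j, hbd k] with ω h1 h2
    rw [abs_mul]
    exact mul_le_mul h1.1 h2.1 (abs_nonneg _) hCb0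
  set A := ∫ ω, M 0 ω ∂P with hA
  set B := ∫ ω, S2 0 ω ∂P with hB
  set Q := ∫ ω, M 0 ω ^ 2 ∂P with hQ
  have hEM : ∀ n, ∫ ω, M n ω ∂P = A := fun n =>
    integral_pair_eq (hmeas n) (hmeas 0) (hident n) measurable_fst
  have hES : ∀ n, ∫ ω, S2 n ω ∂P = B := fun n =>
    integral_pair_eq (hmeas n) (hmeas 0) (hident n) measurable_snd
  have hEM2 : ∀ n, ∫ ω, M n ω ^ 2 ∂P = Q := fun n =>
    integral_pair_eq (hmeas n) (hmeas 0) (hident n) (measurable_fst.pow_const 2)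
  have hEMM : ∀ j k, j ≠ k → ∫ ω, M j ω * M k ω ∂P = A ^ 2 := by
    intro j k hjk
    have hI : IndepFun (M j) (M k) P :=
      (hindep.indepFun hjk).comp measurable_fst measurable_fst
    have h2 := hI.integral_mul_eq_mul_integral (hMint j).aestronglyMeasurable
        (hMint k).aestronglyMeasurable
    calc ∫ ω, M j ω * M k ω ∂P = (∫ ω, M j ω ∂P) * ∫ ω, M k ω ∂P := h2
      _ = A * A := by rw [hEM j, hEM k]
      _ = A ^ 2 := (sq A).symm
  -- uniform bound on partial sums
  have hFbd : ∀ n, ∀ᵐ ω ∂P, |∑ j ∈ Finset.range n, c j * M j ω| ≤ Cb := by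
    intro n
    filter_upwards [hgood] with ω h
    calc |∑ j ∈ Finset.range n, c j * M j ω|
        ≤ ∑ j ∈ Finset.range n, |c j * M j ω| := Finset.abs_sum_le_sum_abs _ _
      _ ≤ ∑ j ∈ Finset.range n, c j * Cb := Finset.sum_le_sum fun j _ => by
          rw [abs_mul, abs_of_nonneg (hc0 j)]
          exact mul_le_mul_of_nonneg_left (h j).1 (hc0 j)
      _ ≤ ∑' j, c j * Cb := Summable.sum_le_tsum (Finset.range n)
          (fun j _ => mul_nonneg (hc0 j) hCb0) (hcsum.mul_right Cb)
      _ = 1 * Cb := (hsumc.mul_right Cb).tsum_eq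
      _ = Cb := one_mul Cb
  have hGbd : ∀ n, ∀ᵐ ω ∂P, |∑ j ∈ Finset.range n, d j * S2 j ω| ≤ Cb := by
    intro n
    filter_upwards [hgood] with ω h
    calc |∑ j ∈ Finset.range n, d j * S2 j ω|
        ≤ ∑ j ∈ Finset.range n, |d j * S2 j ω| := Finset.abs_sum_le_sum_abs _ _
      _ ≤ ∑ j ∈ Finset.range n, d j * Cb := Finset.sum_le_sum fun j _ => by
          rw [abs_mul, abs_of_nonneg (hd0 j)]
          exact mul_le_mul_of_nonneg_left (h j).2.1 (hd0 j)
      _ ≤ ∑' j, d j * Cb := Summable.sum_le_tsum (Finset.range n)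
          (fun j _ => mul_nonneg (hd0 j) hCb0) (hdsum.mul_right Cb)
      _ = 1 * Cb := (hsumd.mul_right Cb).tsum_eq
      _ = Cb := one_mul Cb
  -- first series moment
  have hD1 : ∫ ω, μinf ω ∂P = A := by
    have hdct := tendsto_integral_of_dominated_convergence (μ := P)
      (F := fun n ω => ∑ j ∈ Finset.range n, c j * M j ω) (f := μinf) (fun _ => Cb)
      (fun n => (hFmeas n).aestronglyMeasurable) (integrable_const Cb)
      (fun n => by simpa [Real.norm_eq_abs] using hFbd n) haetendμ
    have heq : ∀ n, ∫ ω, (∑ j ∈ Finset.range n, c j * M j ω) ∂P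
        = ∑ j ∈ Finset.range n, c j * A := by
      intro n
      rw [integral_finset_sum _ (fun j _ => (hMint j).const_mul (c j))]
      exact Finset.sum_congr rfl fun j _ => by
        rw [MeasureTheory.integral_const_mul, hEM j]
    simp_rw [heq] at hdct
    have h2 : Tendsto (fun n => ∑ j ∈ Finset.range n, c j * A) atTop (𝓝 (1 * A)) :=
      (hsumc.mul_right A).tendsto_sum_nat
    rw [one_mul] at h2
    exact tendsto_nhds_unique hdct h2
  -- second series moment
  have hD2 : ∫ ω, σinf ω ∂P = B := by
    have hdct := tendsto_integral_of_dominated_convergence (μ := P)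
      (F := fun n ω => ∑ j ∈ Finset.range n, d j * S2 j ω) (f := σinf) (fun _ => Cb)
      (fun n => (hGmeas n).aestronglyMeasurable) (integrable_const Cb)
      (fun n => by simpa [Real.norm_eq_abs] using hGbd n) haetendσ
    have hSint : ∀ n, Integrable (S2 n) P := fun n =>
      integrable_of_ae_bounded (hS n).aestronglyMeasurable ((hbd n).mono fun ω h => h.2)
    have heq : ∀ n, ∫ ω, (∑ j ∈ Finset.range n, d j * S2 j ω) ∂P
        = ∑ j ∈ Finset.range n, d j * B := by
      intro n
      rw [integral_finset_sum _ (fun j _ => (hSint j).const_mul (d j))]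
      exact Finset.sum_congr rfl fun j _ => by
        rw [MeasureTheory.integral_const_mul, hES j]
    simp_rw [heq] at hdct
    have h2 : Tendsto (fun n => ∑ j ∈ Finset.range n, d j * B) atTop (𝓝 (1 * B)) :=
      (hsumd.mul_right B).tendsto_sum_nat
    rw [one_mul] at h2
    exact tendsto_nhds_unique hdct h2
  -- the variance series
  have hsumc2' : HasSum (fun j => c j ^ 2) ((1 - α) / (1 + α)) := by
    simpa [hc] using hsumc2
  have hD3 : ∫ ω, μinf ω ^ 2 ∂P = A ^ 2 + (1 - α) / (1 + α) * (Q - A ^ 2) := by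
    have haetend2 : ∀ᵐ ω ∂P, Tendsto (fun n => (∑ j ∈ Finset.range n, c j * M j ω) ^ 2)
        atTop (𝓝 (μinf ω ^ 2)) := by
      filter_upwards [haetendμ] with ω h
      exact h.pow 2
    have hdct := tendsto_integral_of_dominated_convergence (μ := P)
      (F := fun n ω => (∑ j ∈ Finset.range n, c j * M j ω) ^ 2)
      (f := fun ω => μinf ω ^ 2) (fun _ => Cb ^ 2)
      (fun n => ((hFmeas n).pow_const 2).aestronglyMeasurable) (integrable_const _)
      (fun n => by
        filter_upwards [hFbd n] with ω h
        rw [Real.norm_eq_abs, abs_pow]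
        exact pow_le_pow_left₀ (abs_nonneg _) h 2) haetend2
    have heq : ∀ n, ∫ ω, (∑ j ∈ Finset.range n, c j * M j ω) ^ 2 ∂P
        = (∑ j ∈ Finset.range n, c j) ^ 2 * A ^ 2
          + (∑ j ∈ Finset.range n, c j ^ 2) * (Q - A ^ 2) := by
      intro n
      have hexp : ∀ ω, (∑ j ∈ Finset.range n, c j * M j ω) ^ 2
          = ∑ j ∈ Finset.range n, ∑ k ∈ Finset.range n, c j * c k * (M j ω * M k ω) := by
        intro ω
        rw [sq, Finset.sum_mul_sum]
        exact Finset.sum_congr rfl fun j _ => Finset.sum_congr rfl fun k _ => by ring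
      simp_rw [hexp]
      rw [integral_finset_sum _ (fun j _ => integrable_finset_sum _
        (fun k _ => (hMMint j k).const_mul _))]
      have hinner : ∀ j ∈ Finset.range n,
          ∫ ω, (∑ k ∈ Finset.range n, c j * c k * (M j ω * M k ω)) ∂P
            = ∑ k ∈ Finset.range n, c j * c k * (if j = k then Q else A ^ 2) := by
        intro j _
        rw [integral_finset_sum _ (fun k _ => (hMMint j k).const_mul _)]
        refine Finset.sum_congr rfl fun k _ => ?_
        rw [MeasureTheory.integral_const_mul]
        by_cases hjk : j = k
        · subst hjk
          rw [if_pos rfl]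
          congr 1
          rw [← hEM2 j]
          exact integral_congr_ae (Filter.Eventually.of_forall fun ω => (sq (M j ω)).symm)
        · rw [if_neg hjk, hEMM j k hjk]
      rw [Finset.sum_congr rfl hinner]
      -- algebra
      have hterm : ∀ j k : ℕ, c j * c k * (if j = k then Q else A ^ 2)
          = c j * c k * A ^ 2 + (if j = k then c j * c k * (Q - A ^ 2) else 0) := by
        intro j k
        by_cases h : j = k <;> simp [h] <;> ring
      simp_rw [hterm, Finset.sum_add_distrib]
      congr 1
      · simp_rw [← Finset.sum_mul]
        rw [← Finset.sum_mul_sum]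
        ring
      · have : ∀ j ∈ Finset.range n,
            (∑ k ∈ Finset.range n, if j = k then c j * c k * (Q - A ^ 2) else 0)
              = c j ^ 2 * (Q - A ^ 2) := by
          intro j hj
          rw [Finset.sum_ite_eq, if_pos hj]
          ring
        rw [Finset.sum_congr rfl this, ← Finset.sum_mul]
    simp_rw [heq] at hdct
    have h2 : Tendsto (fun n => (∑ j ∈ Finset.range n, c j) ^ 2 * A ^ 2
        + (∑ j ∈ Finset.range n, c j ^ 2) * (Q - A ^ 2)) atTop
        (𝓝 ((1:ℝ) ^ 2 * A ^ 2 + (1 - α) / (1 + α) * (Q - A ^ 2))) :=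
      ((hsumc.tendsto_sum_nat.pow 2).mul_const _).add
        (hsumc2'.tendsto_sum_nat.mul_const _)
    have h3 := tendsto_nhds_unique hdct h2
    rw [h3]
    ring
  -- remaining integrabilities
  have hσint : Integrable σinf P := by
    refine integrable_of_ae_bounded hσaem.aestronglyMeasurable (C := Cb) ?_
    filter_upwards [haeσbd] with ω h
    rw [abs_of_nonneg h.1]
    exact h.2
  have hμ2int : Integrable (fun ω => μinf ω ^ 2) P := by
    refine integrable_of_ae_bounded (hμaem.pow_const 2).aestronglyMeasurable
      (C := Cb ^ 2) ?_
    filter_upwards [haeμbd] with ω h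
    rw [abs_pow]
    exact pow_le_pow_left₀ (abs_nonneg _) h 2
  have hMmem2 : MemLp (M 0) 2 P :=
    MemLp.of_bound (hM 0).aestronglyMeasurable Cb
      (by simpa [Real.norm_eq_abs] using (hbd 0).mono fun ω h => h.1)
  constructor
  · rw [hEX, hD1]
  · rw [variance_eq_sub hXmem2, variance_eq_sub hMmem2]
    have e1 : ∫ ω, (X ^ 2) ω ∂P = ∫ ω, X ω ^ 2 ∂P := rfl
    have e2 : ∫ ω, (M 0 ^ 2) ω ∂P = Q := rfl
    have e3 : ∫ ω, X ω ^ 2 ∂P = B + (A ^ 2 + (1 - α) / (1 + α) * (Q - A ^ 2)) := by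
      rw [hEX2, integral_add hσint hμ2int, hD2, hD3]
    have e4 : ∫ ω, X ω ∂P = A := by rw [hEX, hD1]
    simp only [Pi.pow_apply]
    rw [e3, e4, ← hQ, ← hA]
    ring
end
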